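/- Let H be a complex Hilbert space, A a bounded self-adjoint operator on H, C a compact operator on H such that A + C is self-adjoint, and λ ∈ ℝ. Then there exists a sequence (u_n) in H with ‖u_n‖ = 1 for all n, ⟨y, u_n⟩ → 0 for every y ∈ H, and ‖A u_n − λ u_n‖ → 0, if and only if there exists a sequence (v_n) in H with ‖v_n‖ = 1 for all n, ⟨y, v_n⟩ → 0 for every y ∈ H, and ‖(A + C) v_n − λ v_n‖ → 0. (Weyl's theorem: a compact perturbation does not change the essential spectrum, characterized by singular Weyl sequences.) -/

import Mathlib

open Filter Topology

/-- A compact operator maps weakly null sequences of unit vectors to norm-null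
sequences. -/
lemma compact_map_weak_null {H : Type*} [NormedAddCommGroup H] [InnerProductSpace ℂ H]
    [CompleteSpace H] (C : H →L[ℂ] H) (hC : IsCompactOperator ⇑C) (u : ℕ → H)
    (hnorm : ∀ n, ‖u n‖ = 1)
    (hweak : ∀ y : H, Tendsto (fun n => @inner ℂ _ _ y (u n)) atTop (nhds 0)) :
    Tendsto (fun n => C (u n)) atTop (nhds 0) := by
  obtain ⟨K, hK, hKsub⟩ := hC.image_closedBall_subset_compact 1
  have hmem : ∀ n, C (u n) ∈ K := fun n =>
    hKsub ⟨u n, by simp [Metric.mem_closedBall, (hnorm n).le], rfl⟩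
  apply tendsto_of_subseq_tendsto
  intro ns hns
  obtain ⟨a, _, φ, hφ, ha⟩ := hK.tendsto_subseq (x := fun k => C (u (ns k))) (fun k => hmem (ns k))
  have ha0 : a = 0 := by
    have h1 : ∀ y : H, Tendsto (fun k => @inner ℂ _ _ y (C (u (ns (φ k))))) atTop (nhds 0) := by
      intro y
      have := (hweak ((ContinuousLinearMap.adjoint C) y)).comp
        ((hns.comp hφ.tendsto_atTop))
      simpa [Function.comp_def, ContinuousLinearMap.adjoint_inner_left] using this
    have h2 : ∀ y : H, Tendsto (fun k => @inner ℂ _ _ y (C (u (ns (φ k))))) atTop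
        (nhds (@inner ℂ _ _ y a)) := fun y =>
      (continuous_inner.comp (continuous_const.prodMk continuous_id)).continuousAt.tendsto.comp ha
    have : @inner ℂ _ _ a a = 0 := tendsto_nhds_unique (h2 a) (by simpa using h1 a)
    exact inner_self_eq_zero.mp this
  exact ⟨φ, by rw [ha0] at ha; exact ha⟩

/-- One direction of Weyl's theorem. -/
lemma weyl_aux {H : Type*} [NormedAddCommGroup H] [InnerProductSpace ℂ H] [CompleteSpace H]
    (A C : H →L[ℂ] H) (hC : IsCompactOperator ⇑C) (lam : ℝ)
    (h : ∃ u : ℕ → H, (∀ n, ‖u n‖ = 1) ∧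
        (∀ y : H, Tendsto (fun n => @inner ℂ _ _ y (u n)) atTop (nhds 0)) ∧
        Tendsto (fun n => ‖A (u n) - (lam : ℂ) • u n‖) atTop (nhds 0)) :
    ∃ v : ℕ → H, (∀ n, ‖v n‖ = 1) ∧
        (∀ y : H, Tendsto (fun n => @inner ℂ _ _ y (v n)) atTop (nhds 0)) ∧
        Tendsto (fun n => ‖(A + C) (v n) - (lam : ℂ) • v n‖) atTop (nhds 0) := by
  obtain ⟨u, hnorm, hweak, hA⟩ := h
  refine ⟨u, hnorm, hweak, ?_⟩
  have hCnull : Tendsto (fun n => ‖C (u n)‖) atTop (nhds 0) := by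
    simpa using (compact_map_weak_null C hC u hnorm hweak).norm
  have hsum : Tendsto (fun n => ‖A (u n) - (lam : ℂ) • u n‖ + ‖C (u n)‖) atTop (nhds 0) := by
    simpa using hA.add hCnull
  refine squeeze_zero (fun n => norm_nonneg _) (fun n => ?_) hsum
  have : (A + C) (u n) - (lam : ℂ) • u n = (A (u n) - (lam : ℂ) • u n) + C (u n) := by
    simp [ContinuousLinearMap.add_apply]; abel
  rw [this]
  exact norm_add_le _ _

/-- **Weyl's theorem on compact perturbations**, stated via singular Weyl
sequences: a real number `λ` admits a singular Weyl sequence for `A` if and only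
if it admits one for `A + C`, where `C` is compact and both `A` and `A + C` are
self-adjoint. -/
theorem weyl_essential_spectrum_invariant
    {H : Type*} [NormedAddCommGroup H] [InnerProductSpace ℂ H] [CompleteSpace H]
    (A C : H →L[ℂ] H) (hA : IsSelfAdjoint A) (hC : IsCompactOperator ⇑C)
    (hAC : IsSelfAdjoint (A + C)) (lam : ℝ) :
    (∃ u : ℕ → H, (∀ n, ‖u n‖ = 1) ∧
        (∀ y : H, Tendsto (fun n => @inner ℂ _ _ y (u n)) atTop (nhds 0)) ∧
        Tendsto (fun n => ‖A (u n) - (lam : ℂ) • u n‖) atTop (nhds 0)) ↔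
      (∃ v : ℕ → H, (∀ n, ‖v n‖ = 1) ∧
        (∀ y : H, Tendsto (fun n => @inner ℂ _ _ y (v n)) atTop (nhds 0)) ∧
        Tendsto (fun n => ‖(A + C) (v n) - (lam : ℂ) • v n‖) atTop (nhds 0)) := by
  constructor
  · exact weyl_aux A C hC lam
  · intro h
    have := weyl_aux (A + C) (-C) (by simpa using hC.neg) lam h
    simpa using this
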